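/- Fix q ≥ 1. If the limit lim_{t→∞} P(q-1,t) = P(q-1) exists, then the limit lim_{t→∞} P(q,t) also exists and equals (m(q+A-1)/(m(q+A+1)+A)) · P(q-1). -/

import Mathlib

open Finset Filter Topology


lemma aux_pow_lower {x : ℝ} (h1 : x ≤ 1) (k : ℕ) :
    1 - (k:ℝ) * x ≤ (1 - x) ^ k := by
  have h := one_add_mul_le_pow (a := -x) (by linarith) k
  calc 1 - (k:ℝ)*x = 1 + (k:ℝ)*(-x) := by ring
    _ ≤ (1 + -x)^k := h
    _ = (1 - x)^k := by ring_nf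

lemma aux_pow_upper01 {x : ℝ} (h0 : 0 ≤ x) (h1 : x ≤ 1) (k : ℕ) :
    (1 - x) ^ k ≤ 1 := by
  apply pow_le_one₀ (by linarith) (by linarith)

lemma aux_abs_one_sub_pow_sub_one {x : ℝ} (h0 : 0 ≤ x) (h1 : x ≤ 1) (k : ℕ) :
    |(1 - x) ^ k - 1| ≤ (k:ℝ) * x := by
  rw [abs_le]
  constructor
  · have := aux_pow_lower h1 k; linarith
  · have := aux_pow_upper01 h0 h1 k
    have hk : 0 ≤ (k:ℝ) * x := by positivity
    linarith

lemma aux_abs_bern {x : ℝ} (h0 : 0 ≤ x) (h1 : x ≤ 1) (k : ℕ) :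
    |(1 - x) ^ k - (1 - (k:ℝ) * x)| ≤ (k:ℝ)^2 * x^2 := by
  induction k with
  | zero => simp
  | succ k ih =>
    have h2 : (1-x)^(k+1) - (1 - ((k:ℕ)+1:ℝ)*x)
        = (1-x)*((1-x)^k - (1 - (k:ℝ)*x)) + (k:ℝ)*x^2 := by ring
    have hx1 : |1 - x| ≤ 1 := by rw [abs_le]; constructor <;> linarith
    have habs : |(1-x)*((1-x)^k - (1-(k:ℝ)*x))| ≤ (k:ℝ)^2 * x^2 := by
      rw [abs_mul]
      calc |1-x| * |(1-x)^k - (1-(k:ℝ)*x)| ≤ 1 * ((k:ℝ)^2 * x^2) :=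
            mul_le_mul hx1 ih (abs_nonneg _) zero_le_one
        _ = (k:ℝ)^2 * x^2 := one_mul _
    have hkx : |(k:ℝ)*x^2| = (k:ℝ)*x^2 := abs_of_nonneg (by positivity)
    calc |(1-x)^(k+1) - (1 - ((k+1:ℕ):ℝ)*x)|
        = |(1-x)*((1-x)^k - (1 - (k:ℝ)*x)) + (k:ℝ)*x^2| := by push_cast; rw [← h2]
      _ ≤ |(1-x)*((1-x)^k - (1-(k:ℝ)*x))| + |(k:ℝ)*x^2| := abs_add_le _ _
      _ ≤ (k:ℝ)^2*x^2 + (k:ℝ)*x^2 := by rw [hkx]; exact add_le_add habs le_rfl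
      _ ≤ ((k+1:ℕ):ℝ)^2 * x^2 := by push_cast; nlinarith [sq_nonneg x, Nat.cast_nonneg (α := ℝ) k]

lemma aux_harm (T : ℕ) :
    Tendsto (fun n : ℕ => ∑ k ∈ Finset.range n, (1:ℝ)/((T:ℝ)+(k:ℝ)+1)) atTop atTop := by
  have h0 := Real.tendsto_sum_range_one_div_nat_succ_atTop
  have key : ∀ n : ℕ, ∑ k ∈ Finset.range n, (1:ℝ)/((T:ℝ)+(k:ℝ)+1)
      = (∑ j ∈ Finset.range (T+n), (1:ℝ)/((j:ℝ)+1)) - ∑ j ∈ Finset.range T, (1:ℝ)/((j:ℝ)+1) := by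
    intro n
    rw [Finset.sum_range_add, add_sub_cancel_left]
    apply Finset.sum_congr rfl
    intro k _
    push_cast
    ring
  have h1 : Tendsto (fun n : ℕ => ∑ j ∈ Finset.range (T+n), (1:ℝ)/((j:ℝ)+1)) atTop atTop := by
    have h2 : Tendsto (fun n : ℕ => T + n) atTop atTop :=
      (tendsto_add_atTop_nat T).congr (fun n => add_comm n T)
    exact h0.comp h2
  have h3 := tendsto_atTop_add_const_right atTop (-(∑ j ∈ Finset.range T, (1:ℝ)/((j:ℝ)+1))) h1
  refine h3.congr ?_
  intro n
  rw [key n]; ring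

lemma aux_rec_tendsto (a : ℝ) (ha : 0 ≤ a) (z d : ℕ → ℝ)
    (hrec : ∀ t : ℕ, ((t:ℝ) + 1) * z (t+1) = ((t:ℝ) - a) * z t + d t)
    (hd : Tendsto d atTop (nhds 0)) : Tendsto z atTop (nhds 0) := by
  rw [NormedAddCommGroup.tendsto_nhds_zero]
  intro ε hε
  rw [Filter.eventually_atTop]
  have hd' := NormedAddCommGroup.tendsto_nhds_zero.mp hd ((1+a)*ε/4) (by positivity)
  obtain ⟨N1, hN1⟩ := Filter.eventually_atTop.mp hd'
  set T : ℕ := max N1 ⌈2*(a+1)⌉₊ with hT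
  have hTbig : ∀ t : ℕ, T ≤ t → 2*(a+1) ≤ (t:ℝ) := by
    intro t ht
    have h1 : (⌈2*(a+1)⌉₊ : ℝ) ≤ t := Nat.cast_le.mpr (le_trans (le_max_right _ _) ht)
    exact le_trans (Nat.le_ceil _) h1
  have hda : ∀ t : ℕ, T ≤ t → |d t| ≤ (1+a)*ε/4 := by
    intro t ht
    have := hN1 t (le_trans (le_max_left _ _) ht)
    rw [Real.norm_eq_abs] at this
    exact this.le
  have hest : ∀ t : ℕ, T ≤ t → ((t:ℝ)+1) * |z (t+1)| ≤ ((t:ℝ) - a) * |z t| + (1+a)*ε/4 := by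
    intro t ht
    have hta : 0 ≤ (t:ℝ) - a := by have := hTbig t ht; linarith
    have h1 : ((t:ℝ)+1) * |z (t+1)| = |((t:ℝ) - a) * z t + d t| := by
      rw [← hrec t, abs_mul, abs_of_nonneg (show (0:ℝ) ≤ (t:ℝ)+1 by positivity)]
    calc ((t:ℝ)+1) * |z (t+1)| = |((t:ℝ)-a) * z t + d t| := h1
      _ ≤ |((t:ℝ)-a) * z t| + |d t| := abs_add_le _ _
      _ ≤ ((t:ℝ)-a) * |z t| + (1+a)*ε/4 := by
          rw [abs_mul, abs_of_nonneg hta]; exact add_le_add le_rfl (hda t ht)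
  have hstepA : ∀ t : ℕ, T ≤ t → |z t| ≤ ε/2 → |z (t+1)| ≤ ε/2 := by
    intro t ht hz
    have h := hest t ht
    have hbig := hTbig t ht
    have hta : 0 ≤ (t:ℝ) - a := by linarith
    have h2 : ((t:ℝ)-a) * |z t| ≤ ((t:ℝ)-a) * (ε/2) := mul_le_mul_of_nonneg_left hz hta
    nlinarith [abs_nonneg (z (t+1))]
  have hstepB : ∀ t : ℕ, T ≤ t → ε/2 < |z t| → |z (t+1)| ≤ |z t| - (ε/4) * (1/((t:ℝ)+1)) := by
    intro t ht hz
    have h := hest t ht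
    have hbig := hTbig t ht
    have h3 : ((t:ℝ)+1) * |z (t+1)| ≤ ((t:ℝ)+1) * |z t| - (1+a)*ε/4 := by nlinarith
    have ht1 : (0:ℝ) < (t:ℝ)+1 := by positivity
    have h4 : (1/((t:ℝ)+1)) * ((t:ℝ)+1) = 1 := by field_simp
    nlinarith [mul_le_mul_of_nonneg_left h3 (le_of_lt (show (0:ℝ) < 1/((t:ℝ)+1) by positivity))]
  have hexist : ∃ t, T ≤ t ∧ |z t| ≤ ε/2 := by
    by_contra hcon
    push_neg at hcon
    have hdec : ∀ n : ℕ, |z (T+n)| ≤ |z T| - (ε/4) * ∑ k ∈ Finset.range n, (1:ℝ)/((T:ℝ)+(k:ℝ)+1) := by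
      intro n
      induction n with
      | zero => simp
      | succ n ih =>
        have h := hstepB (T+n) (Nat.le_add_right _ _) (hcon _ (Nat.le_add_right _ _))
        rw [Finset.sum_range_succ]
        have hidx : T + (n+1) = (T+n) + 1 := by omega
        rw [hidx]
        have hc : ((T+n : ℕ):ℝ) = (T:ℝ)+(n:ℝ) := by push_cast; ring
        rw [hc] at h
        linarith
    obtain ⟨n, hn⟩ := (Filter.tendsto_atTop.mp (aux_harm T) (|z T| * (4/ε) + 1)).exists
    have h5 := hdec n
    have h6 := hcon (T+n) (Nat.le_add_right _ _)
    have h7 : (ε/4) * (|z T| * (4/ε) + 1) ≤ (ε/4) * ∑ k ∈ Finset.range n, (1:ℝ)/((T:ℝ)+(k:ℝ)+1) :=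
      mul_le_mul_of_nonneg_left hn (by positivity)
    have h8 : (ε/4) * (|z T| * (4/ε) + 1) = |z T| + ε/4 := by field_simp
    nlinarith [abs_nonneg (z (T+n))]
  obtain ⟨t0, ht0T, ht0⟩ := hexist
  refine ⟨t0, fun t ht => ?_⟩
  have hb : |z t| ≤ ε/2 := by
    induction t, ht using Nat.le_induction with
    | base => exact ht0
    | succ t ht ih => exact hstepA t (le_trans ht0T ht) ih
  rw [Real.norm_eq_abs]
  linarith

section Model
variable {m : ℕ} {A : ℝ} {P : ℕ → ℕ → ℕ → ℝ}

lemma Psupp (hP11 : ∀ q : ℕ, P q 1 1 = if q = m then 1 else 0)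
    (hPii : ∀ q i : ℕ, 2 ≤ i → P q i i = if q = 0 then 1 else 0)
    (hPrec : ∀ q i t : ℕ, 1 ≤ i → i ≤ t →
      P q i (t + 1) = ∑ j ∈ Finset.Icc 0 (min m q),
        (m.choose j : ℝ) * (((q : ℝ) - (j : ℝ) + A) / ((m + A) * t)) ^ j *
          (1 - ((q : ℝ) - (j : ℝ) + A) / ((m + A) * t)) ^ (m - j) * P (q - j) i t) :
    ∀ t i q, 1 ≤ i → i ≤ t → m * t < q → P q i t = 0 := by
  intro t
  induction t with
  | zero => intro i q h1 h2 _; omega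
  | succ t ih =>
    intro i q h1 h2 hq
    rcases Nat.lt_or_ge i (t+1) with hi | hi
    · have hit : i ≤ t := by omega
      rw [hPrec q i t h1 hit]
      apply Finset.sum_eq_zero
      intro j hj
      simp only [Finset.mem_Icc] at hj
      have hjm : j ≤ m := le_trans hj.2 (min_le_left _ _)
      have hmul : m*(t+1) = m*t + m := by ring
      rw [ih i (q - j) h1 hit (by omega), mul_zero]
    · have hieq : i = t + 1 := by omega
      subst hieq
      rcases Nat.eq_zero_or_pos t with ht | ht
      · subst ht
        rw [hP11 q, if_neg (by omega)]
      · rw [hPii q (t+1) (by omega), if_neg (by omega)]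

lemma Pnonneg (hA : 0 < A)
    (hP11 : ∀ q : ℕ, P q 1 1 = if q = m then 1 else 0)
    (hPii : ∀ q i : ℕ, 2 ≤ i → P q i i = if q = 0 then 1 else 0)
    (hPrec : ∀ q i t : ℕ, 1 ≤ i → i ≤ t →
      P q i (t + 1) = ∑ j ∈ Finset.Icc 0 (min m q),
        (m.choose j : ℝ) * (((q : ℝ) - (j : ℝ) + A) / ((m + A) * t)) ^ j *
          (1 - ((q : ℝ) - (j : ℝ) + A) / ((m + A) * t)) ^ (m - j) * P (q - j) i t) :
    ∀ t i q, 1 ≤ i → i ≤ t → 0 ≤ P q i t := by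
  intro t
  induction t with
  | zero => intro i q h1 h2; omega
  | succ t ih =>
    intro i q h1 h2
    rcases Nat.lt_or_ge i (t+1) with hi | hi
    · have hit : i ≤ t := by omega
      have ht1 : 1 ≤ t := le_trans h1 hit
      rw [hPrec q i t h1 hit]
      apply Finset.sum_nonneg
      intro j hj
      simp only [Finset.mem_Icc] at hj
      have hjm : j ≤ m := le_trans hj.2 (min_le_left _ _)
      have hjq : j ≤ q := le_trans hj.2 (min_le_right _ _)
      by_cases hsup : m * t < q - j
      · rw [Psupp hP11 hPii hPrec t i (q-j) h1 hit hsup, mul_zero]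
      · push_neg at hsup
        have hden : (0:ℝ) < ((m:ℝ) + A) * t := by
          have : (1:ℝ) ≤ (t:ℝ) := by exact_mod_cast ht1
          have hmA : (0:ℝ) < (m:ℝ) + A := by positivity
          nlinarith
        have hnum : (0:ℝ) ≤ (q:ℝ) - (j:ℝ) + A := by
          have : (j:ℝ) ≤ (q:ℝ) := by exact_mod_cast hjq
          linarith
        have hx0 : (0:ℝ) ≤ ((q:ℝ) - (j:ℝ) + A) / (((m:ℝ) + A) * t) := div_nonneg hnum hden.le
        have hx1 : ((q:ℝ) - (j:ℝ) + A) / (((m:ℝ) + A) * t) ≤ 1 := by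
          rw [div_le_one hden]
          have hqj : ((q:ℝ) - (j:ℝ)) ≤ (m:ℝ) * t := by
            have : ((q - j : ℕ):ℝ) ≤ ((m * t : ℕ):ℝ) := by exact_mod_cast hsup
            push_cast at this
            have hjq' : (j:ℝ) ≤ (q:ℝ) := by exact_mod_cast hjq
            rw [Nat.cast_sub hjq] at this
            linarith
          have ht1' : (1:ℝ) ≤ (t:ℝ) := by exact_mod_cast ht1
          nlinarith
        exact mul_nonneg (mul_nonneg (mul_nonneg (by positivity) (pow_nonneg hx0 _))
          (pow_nonneg (by linarith) _)) (ih i (q - j) h1 hit)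
    · have hieq : i = t + 1 := by omega
      subst hieq
      rcases Nat.eq_zero_or_pos t with ht | ht
      · subst ht; rw [hP11 q]; split <;> norm_num
      · rw [hPii q (t+1) (by omega)]; split <;> norm_num

lemma Psum (hA : 0 < A)
    (hsupp : ∀ t i q, 1 ≤ i → i ≤ t → m * t < q → P q i t = 0)
    (hP11 : ∀ q : ℕ, P q 1 1 = if q = m then 1 else 0)
    (hPii : ∀ q i : ℕ, 2 ≤ i → P q i i = if q = 0 then 1 else 0)
    (hPrec : ∀ q i t : ℕ, 1 ≤ i → i ≤ t →
      P q i (t + 1) = ∑ j ∈ Finset.Icc 0 (min m q),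
        (m.choose j : ℝ) * (((q : ℝ) - (j : ℝ) + A) / ((m + A) * t)) ^ j *
          (1 - ((q : ℝ) - (j : ℝ) + A) / ((m + A) * t)) ^ (m - j) * P (q - j) i t) :
    ∀ t i, 1 ≤ i → i ≤ t → ∑ r ∈ Finset.range (m*t+1), P r i t = 1 := by
  intro t
  induction t with
  | zero => intro i h1 h2; omega
  | succ t ih =>
    intro i h1 h2
    rcases Nat.lt_or_ge i (t+1) with hi | hi
    · have hit : i ≤ t := by omega
      have ht1 : 1 ≤ t := le_trans h1 hit
      have hbin : ∀ y : ℝ, ∑ j ∈ Finset.range (m+1), (m.choose j : ℝ) * y^j * (1-y)^(m-j) = 1 := by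
        intro y
        have h := add_pow y (1-y) m
        have h2 : (y + (1-y)) = 1 := by ring
        rw [h2, one_pow] at h
        exact (Finset.sum_congr rfl (fun k _ => by ring)).trans h.symm
      calc ∑ r ∈ Finset.range (m*(t+1)+1), P r i (t+1)
          = ∑ q ∈ Finset.range (m*(t+1)+1), ∑ j ∈ Finset.range (m+1),
              (if j ≤ q then (m.choose j : ℝ) * (((q : ℝ) - (j : ℝ) + A) / ((m + A) * t)) ^ j *
                (1 - ((q : ℝ) - (j : ℝ) + A) / ((m + A) * t)) ^ (m - j) * P (q - j) i t else 0) := by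
            apply Finset.sum_congr rfl
            intro q _
            rw [hPrec q i t h1 hit, ← Finset.sum_filter]
            apply Finset.sum_congr _ (fun _ _ => rfl)
            ext j
            simp only [Finset.mem_Icc, Finset.mem_filter, Finset.mem_range]
            omega
        _ = ∑ j ∈ Finset.range (m+1), ∑ q ∈ Finset.range (m*(t+1)+1),
              (if j ≤ q then (m.choose j : ℝ) * (((q : ℝ) - (j : ℝ) + A) / ((m + A) * t)) ^ j *
                (1 - ((q : ℝ) - (j : ℝ) + A) / ((m + A) * t)) ^ (m - j) * P (q - j) i t else 0) :=
            Finset.sum_comm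
        _ = ∑ j ∈ Finset.range (m+1), ∑ r ∈ Finset.range (m*t+1),
              (m.choose j : ℝ) * (((r : ℝ) + A) / ((m + A) * t)) ^ j *
                (1 - ((r : ℝ) + A) / ((m + A) * t)) ^ (m - j) * P r i t := by
            apply Finset.sum_congr rfl
            intro j hj
            have hjm : j ≤ m := by simpa [Nat.lt_succ_iff] using hj
            rw [← Finset.sum_filter]
            have hfe : (Finset.range (m*(t+1)+1)).filter (fun q => j ≤ q)
                = Finset.Ico j (m*(t+1)+1) := by
              ext q
              simp only [Finset.mem_filter, Finset.mem_range, Finset.mem_Ico]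
              omega
            rw [hfe, Finset.sum_Ico_eq_sum_range]
            have hred : ∀ r : ℕ, (m.choose j : ℝ) * (((j+r : ℕ) - (j : ℝ) + A) / ((m + A) * t)) ^ j *
                (1 - (((j+r:ℕ) : ℝ) - (j : ℝ) + A) / ((m + A) * t)) ^ (m - j) * P ((j+r) - j) i t
                = (m.choose j : ℝ) * (((r : ℝ) + A) / ((m + A) * t)) ^ j *
                (1 - ((r : ℝ) + A) / ((m + A) * t)) ^ (m - j) * P r i t := by
              intro r
              have h1 : ((j+r:ℕ) : ℝ) - (j : ℝ) + A = (r:ℝ) + A := by push_cast; ring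
              have h2 : (j+r) - j = r := by omega
              rw [h1, h2]
            have hsub : Finset.range (m*t+1) ⊆ Finset.range (m*(t+1)+1-j) := by
              apply Finset.range_subset_range.mpr
              have : m*(t+1) = m*t+m := by ring
              omega
            rw [show ∑ r ∈ Finset.range (m*(t+1)+1-j),
                  (m.choose j : ℝ) * ((((j+r:ℕ) : ℝ) - (j : ℝ) + A) / ((m + A) * t)) ^ j *
                  (1 - (((j+r:ℕ) : ℝ) - (j : ℝ) + A) / ((m + A) * t)) ^ (m - j) * P ((j+r) - j) i t
                = ∑ r ∈ Finset.range (m*(t+1)+1-j),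
                  (m.choose j : ℝ) * (((r : ℝ) + A) / ((m + A) * t)) ^ j *
                  (1 - ((r : ℝ) + A) / ((m + A) * t)) ^ (m - j) * P r i t from
              Finset.sum_congr rfl (fun r _ => hred r)]
            refine (Finset.sum_subset hsub ?_).symm
            intro r hr hnr
            simp only [Finset.mem_range] at hr hnr
            rw [hsupp t i r h1 hit (by omega), mul_zero]
        _ = ∑ r ∈ Finset.range (m*t+1), (∑ j ∈ Finset.range (m+1),
              (m.choose j : ℝ) * (((r : ℝ) + A) / ((m + A) * t)) ^ j *
                (1 - ((r : ℝ) + A) / ((m + A) * t)) ^ (m - j)) * P r i t := by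
            rw [Finset.sum_comm]
            exact Finset.sum_congr rfl (fun r _ => by rw [Finset.sum_mul])
        _ = ∑ r ∈ Finset.range (m*t+1), P r i t := by
            apply Finset.sum_congr rfl
            intro r _
            rw [hbin, one_mul]
        _ = 1 := ih i h1 hit
    · have hieq : i = t + 1 := by omega
      subst hieq
      rcases Nat.eq_zero_or_pos t with ht | ht
      · subst ht
        have : ∀ r, P r 1 1 = if r = m then (1:ℝ) else 0 := hP11
        simp only [this]
        rw [Finset.sum_ite_eq' (Finset.range (m*1+1)) m (fun _ => (1:ℝ))]
        rw [if_pos (by simp)]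
      · have h2 : ∀ r, P r (t+1) (t+1) = if r = 0 then (1:ℝ) else 0 :=
          fun r => hPii r (t+1) (by omega)
        simp only [h2]
        rw [Finset.sum_ite_eq' (Finset.range (m*(t+1)+1)) 0 (fun _ => (1:ℝ))]
        rw [if_pos (by simp [Finset.mem_range])]

set_option maxHeartbeats 1000000 in
lemma master_estimate (hm : 1 ≤ m) (hA : 0 < A)
    (hnn : ∀ t i q, 1 ≤ i → i ≤ t → 0 ≤ P q i t)
    (hle : ∀ t i q, 1 ≤ i → i ≤ t → P q i t ≤ 1)
    (hPii : ∀ q i : ℕ, 2 ≤ i → P q i i = if q = 0 then 1 else 0)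
    (hPrec : ∀ q i t : ℕ, 1 ≤ i → i ≤ t →
      P q i (t + 1) = ∑ j ∈ Finset.Icc 0 (min m q),
        (m.choose j : ℝ) * (((q : ℝ) - (j : ℝ) + A) / ((m + A) * t)) ^ j *
          (1 - ((q : ℝ) - (j : ℝ) + A) / ((m + A) * t)) ^ (m - j) * P (q - j) i t)
    (Pnet : ℕ → ℕ → ℝ)
    (hPnet : ∀ q t : ℕ, 1 ≤ t →
      Pnet q t = (1 / (t : ℝ)) * ∑ i ∈ Finset.Icc 1 t, P q i t)
    (q : ℕ) (hq : 1 ≤ q) :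
    ∀ t : ℕ, q + ⌈A⌉₊ + 1 ≤ t →
      |((t:ℝ)+1) * Pnet q (t+1) - ((((t:ℝ) - (m:ℝ)*((q:ℝ)+A)/((m:ℝ)+A)) * Pnet q t)
        + ((m:ℝ)*((q:ℝ)+A-1)/((m:ℝ)+A)) * Pnet (q-1) t)|
      ≤ ((2*(m:ℝ)^2 + 2^m) * ((q:ℝ)+A)^2) / t := by
  intro t ht
  have ht1 : 1 ≤ t := by omega
  have htR0 : (1:ℝ) ≤ (t:ℝ) := by exact_mod_cast ht1
  have htqA : (q:ℝ) + A ≤ (t:ℝ) := by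
    have h1 : ((q + ⌈A⌉₊ + 1 : ℕ):ℝ) ≤ (t:ℝ) := by exact_mod_cast ht
    have h2 : A ≤ (⌈A⌉₊ : ℝ) := Nat.le_ceil A
    push_cast at h1
    linarith
  have hmR : (1:ℝ) ≤ (m:ℝ) := by exact_mod_cast hm
  have hqR : (1:ℝ) ≤ (q:ℝ) := by exact_mod_cast hq
  have hden : (0:ℝ) < ((m:ℝ)+A) * t := by nlinarith
  set x0 : ℝ := ((q:ℝ) + A) / (((m:ℝ)+A) * t) with hx0def
  set x1 : ℝ := ((q:ℝ) - 1 + A) / (((m:ℝ)+A) * t) with hx1def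
  have hx0nn : 0 ≤ x0 := div_nonneg (by linarith) hden.le
  have hx0le : x0 ≤ ((q:ℝ)+A) / t := by
    apply div_le_div_of_nonneg_left (by linarith) (by linarith) (by nlinarith)
  have hx0le1 : x0 ≤ 1 := by
    apply le_trans hx0le
    rw [div_le_one (by linarith)]
    exact htqA
  have hx1nn : 0 ≤ x1 := div_nonneg (by linarith) hden.le
  have hx1le : x1 ≤ x0 := by
    rw [div_le_div_iff_of_pos_right hden]
    linarith
  have hx1le1 : x1 ≤ 1 := le_trans hx1le hx0le1
  clear_value x0 x1
  set g : ℕ → ℝ := fun i => (1 - (m:ℝ)*x0) * P q i t + (m:ℝ)*x1 * P (q-1) i t with hgdef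
  clear_value g
  have htne : (t:ℝ) ≠ 0 := by linarith
  have ht1ne : (t:ℝ) + 1 ≠ 0 := by linarith
  -- step 2 : (t+1) * Pnet q (t+1) = ∑_{i∈Icc 1 t} P q i (t+1)
  have h2 : ((t:ℝ)+1) * Pnet q (t+1) = ∑ i ∈ Finset.Icc 1 t, P q i (t+1) := by
    rw [hPnet q (t+1) (by omega)]
    rw [Finset.sum_Icc_succ_top (by omega : 1 ≤ t + 1)]
    rw [hPii q (t+1) (by omega), if_neg (by omega)]
    push_cast
    field_simp
    simp
  -- step 3
  have hsum_q : ∑ i ∈ Finset.Icc 1 t, P q i t = (t:ℝ) * Pnet q t := by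
    rw [hPnet q t ht1]; field_simp
  have hsum_q1 : ∑ i ∈ Finset.Icc 1 t, P (q-1) i t = (t:ℝ) * Pnet (q-1) t := by
    rw [hPnet (q-1) t ht1]; field_simp
  have h3 : ∑ i ∈ Finset.Icc 1 t, g i
      = (((t:ℝ) - (m:ℝ)*((q:ℝ)+A)/((m:ℝ)+A)) * Pnet q t)
        + ((m:ℝ)*((q:ℝ)+A-1)/((m:ℝ)+A)) * Pnet (q-1) t := by
    simp only [hgdef]
    rw [Finset.sum_add_distrib, ← Finset.mul_sum, ← Finset.mul_sum, hsum_q, hsum_q1]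
    have e1 : (1 - (m:ℝ)*x0) * ((t:ℝ) * Pnet q t)
        = ((t:ℝ) - (m:ℝ)*((q:ℝ)+A)/((m:ℝ)+A)) * Pnet q t := by
      rw [hx0def]
      field_simp
    have e2 : (m:ℝ)*x1 * ((t:ℝ) * Pnet (q-1) t)
        = ((m:ℝ)*((q:ℝ)+A-1)/((m:ℝ)+A)) * Pnet (q-1) t := by
      rw [hx1def]
      field_simp
      ring
    rw [e1, e2]
  -- per-i estimate
  have hperi : ∀ i ∈ Finset.Icc 1 t, |P q i (t+1) - g i| ≤ (2*(m:ℝ)^2 + 2^m) * x0^2 := by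
    intro i hi
    simp only [Finset.mem_Icc] at hi
    have hP0 := hnn t i q hi.1 hi.2
    have hP1 := hle t i q hi.1 hi.2
    have hP0' := hnn t i (q-1) hi.1 hi.2
    have hP1' := hle t i (q-1) hi.1 hi.2
    rw [hPrec q i t hi.1 hi.2]
    have hminq : 1 ≤ min m q := by omega
    have hsplit : Finset.Icc 0 (min m q) = insert 0 (insert 1 (Finset.Icc 2 (min m q))) := by
      ext j
      simp only [Finset.mem_Icc, Finset.mem_insert]
      omega
    rw [hsplit, Finset.sum_insert (by simp), Finset.sum_insert (by simp)]
    simp only [Nat.choose_zero_right, Nat.choose_one_right, Nat.cast_zero, Nat.cast_one,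
      pow_zero, pow_one, Nat.sub_zero, sub_zero, one_mul, mul_one]
    set S : ℝ := ∑ j ∈ Finset.Icc 2 (min m q),
        (m.choose j : ℝ) * (((q : ℝ) - (j : ℝ) + A) / (((m:ℝ) + A) * t)) ^ j *
          (1 - ((q : ℝ) - (j : ℝ) + A) / (((m:ℝ) + A) * t)) ^ (m - j) * P (q - j) i t with hSdef
    clear_value S
    have hkey : (1 - ((q:ℝ) + A) / (((m:ℝ) + A) * t)) ^ m * P q i t
        + ((m:ℝ) * (((q:ℝ) - 1 + A) / (((m:ℝ) + A) * t)) *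
            (1 - ((q:ℝ) - 1 + A) / (((m:ℝ) + A) * t)) ^ (m - 1) * P (q - 1) i t + S) - g i
        = ((1-x0)^m - (1 - (m:ℝ)*x0)) * P q i t
          + ((m:ℝ)*x1*((1-x1)^(m-1) - 1)) * P (q-1) i t + S := by
      rw [hgdef, hx0def, hx1def]
      ring
    rw [hkey]
    have e0 : |((1-x0)^m - (1 - (m:ℝ)*x0)) * P q i t| ≤ (m:ℝ)^2 * x0^2 := by
      rw [abs_mul]
      calc |(1-x0)^m - (1 - (m:ℝ)*x0)| * |P q i t| ≤ ((m:ℝ)^2 * x0^2) * 1 := by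
            apply mul_le_mul (aux_abs_bern hx0nn hx0le1 m) _ (abs_nonneg _) (by positivity)
            rw [abs_of_nonneg hP0]; exact hP1
        _ = (m:ℝ)^2 * x0^2 := mul_one _
    have e1 : |((m:ℝ)*x1*((1-x1)^(m-1) - 1)) * P (q-1) i t| ≤ (m:ℝ)^2 * x0^2 := by
      have hm1 : |(1-x1)^(m-1) - 1| ≤ (m:ℝ) * x1 := by
        refine le_trans (aux_abs_one_sub_pow_sub_one hx1nn hx1le1 (m-1)) ?_
        have hc : ((m-1:ℕ):ℝ) ≤ (m:ℝ) := by exact_mod_cast (by omega : (m-1:ℕ) ≤ m)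
        nlinarith
      have hmx : (0:ℝ) ≤ (m:ℝ)*x1 := by positivity
      have habs : |((m:ℝ)*x1*((1-x1)^(m-1) - 1)) * P (q-1) i t|
          = (m:ℝ)*x1 * |(1-x1)^(m-1) - 1| * |P (q-1) i t| := by
        rw [abs_mul, abs_mul, abs_of_nonneg hmx]
      rw [habs]
      have hab : |P (q-1) i t| ≤ 1 := by rw [abs_of_nonneg hP0']; exact hP1'
      calc (m:ℝ)*x1 * |(1-x1)^(m-1) - 1| * |P (q-1) i t|
          ≤ (m:ℝ)*x1 * ((m:ℝ)*x1) * 1 :=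
            mul_le_mul (mul_le_mul_of_nonneg_left hm1 hmx) hab (abs_nonneg _)
              (mul_nonneg hmx hmx)
        _ = (m:ℝ)^2 * x1^2 := by ring
        _ ≤ (m:ℝ)^2 * x0^2 :=
            mul_le_mul_of_nonneg_left (pow_le_pow_left₀ hx1nn hx1le 2) (by positivity)
    have eS : |S| ≤ (2:ℝ)^m * x0^2 := by
      rw [hSdef]
      apply le_trans (Finset.abs_sum_le_sum_abs _ _)
      have hterm : ∀ j ∈ Finset.Icc 2 (min m q),
          |(m.choose j : ℝ) * (((q : ℝ) - (j : ℝ) + A) / (((m:ℝ) + A) * t)) ^ j *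
            (1 - ((q : ℝ) - (j : ℝ) + A) / (((m:ℝ) + A) * t)) ^ (m - j) * P (q - j) i t|
          ≤ (m.choose j : ℝ) * x0^2 := by
        intro j hj
        simp only [Finset.mem_Icc] at hj
        have hjq : j ≤ q := le_trans hj.2 (min_le_right _ _)
        have hjqR : (j:ℝ) ≤ (q:ℝ) := by exact_mod_cast hjq
        set xj : ℝ := ((q : ℝ) - (j : ℝ) + A) / (((m:ℝ) + A) * t) with hxjdef
        have hxjnn : 0 ≤ xj := div_nonneg (by linarith) hden.le
        have hxjle : xj ≤ x0 := by
          rw [hxjdef, hx0def, div_le_div_iff₀ hden hden]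
          nlinarith
        have hxj1 : xj ≤ 1 := le_trans hxjle hx0le1
        clear_value xj
        have hPj0 := hnn t i (q-j) hi.1 hi.2
        have hPj1 := hle t i (q-j) hi.1 hi.2
        rw [abs_of_nonneg (by
          apply mul_nonneg (mul_nonneg (mul_nonneg (by positivity) (pow_nonneg hxjnn _))
            (pow_nonneg (by linarith) _)) hPj0)]
        calc (m.choose j : ℝ) * xj ^ j * (1 - xj) ^ (m - j) * P (q - j) i t
            ≤ (m.choose j : ℝ) * xj ^ j * 1 * 1 := by
              apply mul_le_mul (mul_le_mul le_rfl (pow_le_one₀ (by linarith) (by linarith))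
                (pow_nonneg (by linarith) _) (mul_nonneg (by positivity) (pow_nonneg hxjnn _)))
                hPj1 hPj0 (mul_nonneg (mul_nonneg (by positivity) (pow_nonneg hxjnn _)) zero_le_one)
          _ = (m.choose j : ℝ) * xj ^ j := by ring
          _ ≤ (m.choose j : ℝ) * xj ^ 2 := by
              apply mul_le_mul_of_nonneg_left (pow_le_pow_of_le_one hxjnn hxj1 hj.1) (by positivity)
          _ ≤ (m.choose j : ℝ) * x0 ^ 2 := by
              apply mul_le_mul_of_nonneg_left _ (by positivity)
              apply pow_le_pow_left₀ hxjnn hxjle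
      apply le_trans (Finset.sum_le_sum hterm)
      have hsub2 : Finset.Icc 2 (min m q) ⊆ Finset.range (m+1) := by
        intro j hj
        simp only [Finset.mem_Icc] at hj
        simp only [Finset.mem_range]
        omega
      apply le_trans (Finset.sum_le_sum_of_subset_of_nonneg hsub2 (fun j _ _ => by positivity))
      rw [← Finset.sum_mul]
      have : ∑ j ∈ Finset.range (m+1), (m.choose j:ℝ) = (2:ℝ)^m := by
        rw [← Nat.cast_sum]
        rw [Nat.sum_range_choose]
        push_cast
        ring
      rw [this]
    calc |((1-x0)^m - (1 - (m:ℝ)*x0)) * P q i t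
          + ((m:ℝ)*x1*((1-x1)^(m-1) - 1)) * P (q-1) i t + S|
        ≤ |((1-x0)^m - (1 - (m:ℝ)*x0)) * P q i t
          + ((m:ℝ)*x1*((1-x1)^(m-1) - 1)) * P (q-1) i t| + |S| := abs_add_le _ _
      _ ≤ |((1-x0)^m - (1 - (m:ℝ)*x0)) * P q i t|
          + |((m:ℝ)*x1*((1-x1)^(m-1) - 1)) * P (q-1) i t| + |S| := by
            have := abs_add_le (((1-x0)^m - (1 - (m:ℝ)*x0)) * P q i t)
              (((m:ℝ)*x1*((1-x1)^(m-1) - 1)) * P (q-1) i t)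
            linarith
      _ ≤ (m:ℝ)^2 * x0^2 + (m:ℝ)^2 * x0^2 + (2:ℝ)^m * x0^2 := by linarith
      _ = (2*(m:ℝ)^2 + 2^m) * x0^2 := by ring
  -- conclude
  rw [h2, ← h3, ← Finset.sum_sub_distrib]
  apply le_trans (Finset.abs_sum_le_sum_abs _ _)
  apply le_trans (Finset.sum_le_sum (fun i hi => hperi i hi))
  rw [Finset.sum_const, Nat.card_Icc]
  simp only [Nat.add_sub_cancel, nsmul_eq_mul]
  have hx0sq : x0^2 ≤ (((q:ℝ)+A)/t)^2 := by
    apply pow_le_pow_left₀ hx0nn hx0le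
  have hCpos : (0:ℝ) ≤ 2*(m:ℝ)^2 + 2^m := by positivity
  calc (t:ℝ) * ((2*(m:ℝ)^2 + 2^m) * x0^2)
      ≤ (t:ℝ) * ((2*(m:ℝ)^2 + 2^m) * (((q:ℝ)+A)/t)^2) := by
        apply mul_le_mul_of_nonneg_left (mul_le_mul_of_nonneg_left hx0sq hCpos) (by linarith)
    _ = ((2*(m:ℝ)^2 + 2^m) * ((q:ℝ)+A)^2) / t := by
        field_simp

lemma Ple_one (hsupp : ∀ t i q, 1 ≤ i → i ≤ t → m * t < q → P q i t = 0)
    (hnn : ∀ t i q, 1 ≤ i → i ≤ t → 0 ≤ P q i t)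
    (hsum : ∀ t i, 1 ≤ i → i ≤ t → ∑ r ∈ Finset.range (m*t+1), P r i t = 1) :
    ∀ t i q, 1 ≤ i → i ≤ t → P q i t ≤ 1 := by
  intro t i q h1 h2
  by_cases hs : m * t < q
  · rw [hsupp t i q h1 h2 hs]; norm_num
  · have hmem : q ∈ Finset.range (m*t+1) := by
      simp only [Finset.mem_range]; omega
    have := Finset.single_le_sum (f := fun r => P r i t) (fun r _ => hnn t i r h1 h2) hmem
    rw [hsum t i h1 h2] at this
    exact this


end Model

/-- if `P(q-1,t)` converges, then `P(q,t)` converges to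
`(m(q+A-1)/(m(q+A+1)+A))` times the former limit. -/
theorem dms_degree_limit_recursion
    (m : ℕ) (hm : 1 ≤ m) (A : ℝ) (hA : 0 < A)
    (P : ℕ → ℕ → ℕ → ℝ)
    (hP11 : ∀ q : ℕ, P q 1 1 = if q = m then 1 else 0)
    (hPii : ∀ q i : ℕ, 2 ≤ i → P q i i = if q = 0 then 1 else 0)
    (hPrec : ∀ q i t : ℕ, 1 ≤ i → i ≤ t →
      P q i (t + 1) = ∑ j ∈ Finset.Icc 0 (min m q),
        (m.choose j : ℝ) * (((q : ℝ) - (j : ℝ) + A) / ((m + A) * t)) ^ j *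
          (1 - ((q : ℝ) - (j : ℝ) + A) / ((m + A) * t)) ^ (m - j) * P (q - j) i t)
    (Pnet : ℕ → ℕ → ℝ)
    (hPnet : ∀ q t : ℕ, 1 ≤ t →
      Pnet q t = (1 / (t : ℝ)) * ∑ i ∈ Finset.Icc 1 t, P q i t)
    (q : ℕ) (hq : 1 ≤ q) (L : ℝ)
    (hL : Filter.Tendsto (fun t : ℕ => Pnet (q - 1) t) Filter.atTop (nhds L)) :
    Filter.Tendsto (fun t : ℕ => Pnet q t) Filter.atTop
      (nhds (((m : ℝ) * ((q : ℝ) + A - 1) / ((m : ℝ) * ((q : ℝ) + A + 1) + A)) * L)) := by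
  have hsupp := Psupp hP11 hPii hPrec
  have hnn := Pnonneg hA hP11 hPii hPrec
  have hsum := Psum hA hsupp hP11 hPii hPrec
  have hle := Ple_one hsupp hnn hsum
  have hmR : (1:ℝ) ≤ (m:ℝ) := by exact_mod_cast hm
  have hqR : (1:ℝ) ≤ (q:ℝ) := by exact_mod_cast hq
  set a : ℝ := (m:ℝ) * ((q:ℝ) + A) / ((m:ℝ) + A) with hadef
  set b : ℝ := (m:ℝ) * ((q:ℝ) + A - 1) / ((m:ℝ) + A) with hbdef
  have hmA : (0:ℝ) < (m:ℝ) + A := by linarith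
  have ha0 : 0 ≤ a := by
    rw [hadef]
    apply div_nonneg (mul_nonneg (by linarith) (by linarith)) hmA.le
  have h1a : (0:ℝ) < 1 + a := by linarith
  set l : ℝ := b * L / (1 + a) with hldef
  clear_value a b l
  have hl1a : (1 + a) * l = b * L := by
    rw [hldef, mul_comm, div_mul_cancel₀ _ (ne_of_gt h1a)]
  set E : ℕ → ℝ := fun t => ((t:ℝ)+1) * Pnet q (t+1)
      - ((((t:ℝ) - a) * Pnet q t) + b * Pnet (q-1) t) with hEdef
  have hEbound : ∀ t : ℕ, q + ⌈A⌉₊ + 1 ≤ t →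
      |E t| ≤ ((2*(m:ℝ)^2 + 2^m) * ((q:ℝ)+A)^2) / t := by
    intro t ht
    simp only [hEdef, hadef, hbdef]
    exact master_estimate hm hA hnn hle hPii hPrec Pnet hPnet q hq t ht
  have hEtend : Tendsto E atTop (nhds 0) := by
    apply squeeze_zero_norm' ?_
      (tendsto_const_div_atTop_nhds_zero_nat ((2*(m:ℝ)^2 + 2^m) * ((q:ℝ)+A)^2))
    filter_upwards [Filter.eventually_ge_atTop (q + ⌈A⌉₊ + 1)] with t ht
    rw [Real.norm_eq_abs]
    exact hEbound t ht
  have hd2 : Tendsto (fun t => b * Pnet (q-1) t - b * L) atTop (nhds 0) := by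
    have h := (hL.const_mul b).sub_const (b*L)
    simpa using h
  set d : ℕ → ℝ := fun t => E t + (b * Pnet (q-1) t - b * L) with hddef
  have hdtend : Tendsto d atTop (nhds 0) := by
    have := hEtend.add hd2
    simpa using this
  set z : ℕ → ℝ := fun t => Pnet q t - l with hzdef
  have hrecz : ∀ t : ℕ, ((t:ℝ) + 1) * z (t+1) = ((t:ℝ) - a) * z t + d t := by
    intro t
    simp only [hzdef, hddef, hEdef]
    linear_combination -hl1a
  have hztend := aux_rec_tendsto a ha0 z d hrecz hdtend
  have hfin : Tendsto (fun t : ℕ => Pnet q t) atTop (nhds l) := by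
    have h := hztend.add_const l
    simp only [hzdef, zero_add] at h
    simpa using h
  have hleq : l = ((m:ℝ) * ((q:ℝ) + A - 1) / ((m:ℝ) * ((q:ℝ) + A + 1) + A)) * L := by
    have hne1 : ((m:ℝ) + A) ≠ 0 := ne_of_gt hmA
    have hne2 : ((m:ℝ) * ((q:ℝ) + A + 1) + A) ≠ 0 := by nlinarith
    have hne3 : (1 + a) ≠ 0 := ne_of_gt h1a
    rw [hldef, hadef, hbdef]
    rw [hadef] at hne3
    field_simp
    ring
  rw [← hleq]
  exact hfin
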